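/- Let A, B, C, D be n×n real matrices with A and D symmetric. If the 2n×2n block matrix [[A, B],[C, D]] arises with A = (1/6)H(3h₀ + h₁), B = C = (1/6)H(h₀ + h₁), D = (1/6)H(h₀ + 3h₁), where H(w) is the mass matrix weighted by a positive function w and h₀, h₁ > 0, then the block matrix is symmetric positive definite. -/

import Mathlib

open MeasureTheory Matrix

section
variable {Ω : Type*} [MeasurableSpace Ω] (μ : Measure Ω) {n : ℕ} (ψ : Fin n → Ω → ℝ)

lemma prod_integrable (w : Ω → ℝ)
    (hint : ∀ i j, Integrable (fun ω => w ω * ψ i ω * ψ j ω) μ) (x y : Fin n → ℝ) :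
    Integrable (fun ω => w ω * (∑ i, x i * ψ i ω) * (∑ j, y j * ψ j ω)) μ := by
  have : (fun ω => w ω * (∑ i, x i * ψ i ω) * (∑ j, y j * ψ j ω))
      = fun ω => ∑ j, ∑ i, (x i * y j) * (w ω * ψ i ω * ψ j ω) := by
    funext ω
    simp only [Finset.mul_sum, Finset.sum_mul]
    congr 1; funext i; congr 1; funext j; ring
  rw [this]
  exact integrable_finset_sum _ fun i _ => integrable_finset_sum _ fun j _ =>
    ((hint j i).const_mul _)

lemma dot_mulVec_eq (w : Ω → ℝ)
    (hint : ∀ i j, Integrable (fun ω => w ω * ψ i ω * ψ j ω) μ)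
    (M : Matrix (Fin n) (Fin n) ℝ) (hM : ∀ i j, M i j = ∫ ω, w ω * ψ i ω * ψ j ω ∂μ)
    (x y : Fin n → ℝ) :
    x ⬝ᵥ M.mulVec y = ∫ ω, w ω * (∑ i, x i * ψ i ω) * (∑ j, y j * ψ j ω) ∂μ := by
  have h1 : (fun ω => w ω * (∑ i, x i * ψ i ω) * (∑ j, y j * ψ j ω))
      = fun ω => ∑ j, ∑ i, (x i * y j) * (w ω * ψ i ω * ψ j ω) := by
    funext ω
    simp only [Finset.mul_sum, Finset.sum_mul]
    congr 1; funext i; congr 1; funext j; ring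
  have hI : ∀ j i, Integrable (fun ω => x i * y j * (w ω * ψ i ω * ψ j ω)) μ :=
    fun j i => (hint i j).const_mul _
  have h2 : ∀ j, (∫ ω, ∑ i, x i * y j * (w ω * ψ i ω * ψ j ω) ∂μ)
      = ∑ i, x i * y j * M i j := by
    intro j
    rw [integral_finset_sum _ fun i _ => hI j i]
    exact Finset.sum_congr rfl fun i _ => by rw [integral_const_mul, hM]
  rw [h1, integral_finset_sum _ fun j _ => integrable_finset_sum _ fun i _ => hI j i]
  simp_rw [h2]
  simp only [dotProduct, Matrix.mulVec, Finset.mul_sum]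
  rw [Finset.sum_comm]
  congr 1; funext j; congr 1; funext i; ring

end


/-- The block system of the piecewise-linear-in-time exact potential enstrophy
formulation is symmetric positive definite: with `H(w)ᵢⱼ = ∫ w ψᵢ ψⱼ` the
`w`-weighted Galerkin mass matrix for linearly independent basis functions `ψ`,
and pointwise positive `h₀, h₁`, the block matrix
`[[ (1/6)H(3h₀+h₁), (1/6)H(h₀+h₁) ], [ (1/6)H(h₀+h₁), (1/6)H(h₀+3h₁) ]]`
is positive definite. -/
theorem exact_enstrophy_block_matrix_posDef
    {Ω : Type*} [MeasurableSpace Ω] (μ : Measure Ω)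
    {n : ℕ} (ψ : Fin n → Ω → ℝ)
    (h₀ h₁ : Ω → ℝ)
    (hmeas : ∀ i, Measurable (ψ i))
    (hmeas₀ : Measurable h₀) (hmeas₁ : Measurable h₁)
    (hpos₀ : ∀ ω, 0 < h₀ ω) (hpos₁ : ∀ ω, 0 < h₁ ω)
    (hint₀ : ∀ i j, Integrable (fun ω => h₀ ω * ψ i ω * ψ j ω) μ)
    (hint₁ : ∀ i j, Integrable (fun ω => h₁ ω * ψ i ω * ψ j ω) μ)
    (hindep : ∀ x : Fin n → ℝ,
      (∀ᵐ ω ∂μ, ∑ i, x i * ψ i ω = 0) → x = 0)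
    (H : (Ω → ℝ) → Matrix (Fin n) (Fin n) ℝ)
    (hH : ∀ w i j, H w i j = ∫ ω, w ω * ψ i ω * ψ j ω ∂μ) :
    (Matrix.fromBlocks
      ((1/6 : ℝ) • H (fun ω => 3 * h₀ ω + h₁ ω))
      ((1/6 : ℝ) • H (fun ω => h₀ ω + h₁ ω))
      ((1/6 : ℝ) • H (fun ω => h₀ ω + h₁ ω))
      ((1/6 : ℝ) • H (fun ω => h₀ ω + 3 * h₁ ω))).PosDef := by
  -- integrability of the weighted products
  have hintA : ∀ i j,
      Integrable (fun ω => (3 * h₀ ω + h₁ ω) * ψ i ω * ψ j ω) μ := by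
    intro i j
    have : (fun ω => (3 * h₀ ω + h₁ ω) * ψ i ω * ψ j ω)
        = fun ω => 3 * (h₀ ω * ψ i ω * ψ j ω) + h₁ ω * ψ i ω * ψ j ω := by
      funext ω; ring
    rw [this]; exact ((hint₀ i j).const_mul 3).add (hint₁ i j)
  have hintB : ∀ i j,
      Integrable (fun ω => (h₀ ω + h₁ ω) * ψ i ω * ψ j ω) μ := by
    intro i j
    have : (fun ω => (h₀ ω + h₁ ω) * ψ i ω * ψ j ω)
        = fun ω => h₀ ω * ψ i ω * ψ j ω + h₁ ω * ψ i ω * ψ j ω := by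
      funext ω; ring
    rw [this]; exact (hint₀ i j).add (hint₁ i j)
  have hintD : ∀ i j,
      Integrable (fun ω => (h₀ ω + 3 * h₁ ω) * ψ i ω * ψ j ω) μ := by
    intro i j
    have : (fun ω => (h₀ ω + 3 * h₁ ω) * ψ i ω * ψ j ω)
        = fun ω => h₀ ω * ψ i ω * ψ j ω + 3 * (h₁ ω * ψ i ω * ψ j ω) := by
      funext ω; ring
    rw [this]; exact (hint₀ i j).add ((hint₁ i j).const_mul 3)
  have hsymm : ∀ w i j, H w i j = H w j i := by
    intro w i j
    rw [hH, hH]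
    congr 1; funext ω; ring
  rw [posDef_iff_dotProduct_mulVec]
  constructor
  · -- Hermitian
    ext i j
    cases i <;> cases j <;>
      simp only [conjTranspose_apply, fromBlocks_apply₁₁, fromBlocks_apply₁₂,
        fromBlocks_apply₂₁, fromBlocks_apply₂₂, Matrix.smul_apply, smul_eq_mul,
        star_trivial] <;>
      rw [hsymm]
  · intro z hz
    set x : Fin n → ℝ := z ∘ Sum.inl with hx
    set y : Fin n → ℝ := z ∘ Sum.inr with hy
    set X : Ω → ℝ := fun ω => ∑ i, x i * ψ i ω with hX
    set Y : Ω → ℝ := fun ω => ∑ i, y i * ψ i ω with hY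
    have hzelim : z = Sum.elim x y := (Sum.elim_comp_inl_inr z).symm
    have e1 := dot_mulVec_eq μ ψ _ hintA (H _) (hH _) x x
    have e2 := dot_mulVec_eq μ ψ _ hintB (H _) (hH _) x y
    have e3 := dot_mulVec_eq μ ψ _ hintB (H _) (hH _) y x
    have e4 := dot_mulVec_eq μ ψ _ hintD (H _) (hH _) y y
    have hI1 := prod_integrable μ ψ _ hintA x x
    have hI2 := prod_integrable μ ψ _ hintB x y
    have hI3 := prod_integrable μ ψ _ hintB y x
    have hI4 := prod_integrable μ ψ _ hintD y y
    have hform : star z ⬝ᵥ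
        (Matrix.fromBlocks
          ((1/6 : ℝ) • H (fun ω => 3 * h₀ ω + h₁ ω))
          ((1/6 : ℝ) • H (fun ω => h₀ ω + h₁ ω))
          ((1/6 : ℝ) • H (fun ω => h₀ ω + h₁ ω))
          ((1/6 : ℝ) • H (fun ω => h₀ ω + 3 * h₁ ω))) *ᵥ z
        = (1/6 : ℝ) * ∫ ω, ((3 * h₀ ω + h₁ ω) * X ω * X ω
            + (h₀ ω + h₁ ω) * X ω * Y ω
            + (h₀ ω + h₁ ω) * Y ω * X ω
            + (h₀ ω + 3 * h₁ ω) * Y ω * Y ω) ∂μ := by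
      have hstar : star z = z := by
        funext i; exact star_trivial _
      rw [hstar]
      conv_lhs => rw [hzelim]
      rw [fromBlocks_mulVec, sumElim_dotProduct_sumElim,
        dotProduct_add, dotProduct_add]
      simp only [smul_mulVec, dotProduct_smul, smul_eq_mul,
        Sum.elim_comp_inl, Sum.elim_comp_inr]
      rw [e1, e2, e3, e4]
      have h4 := integral_add ((hI1.add hI2).add hI3) hI4
      have h3 := integral_add (hI1.add hI2) hI3
      have h2 := integral_add hI1 hI2
      simp only [Pi.add_apply] at h4 h3 h2
      rw [h4, h3, h2]
      ring
    rw [hform]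
    set g : Ω → ℝ := fun ω => (3 * h₀ ω + h₁ ω) * X ω * X ω
            + (h₀ ω + h₁ ω) * X ω * Y ω
            + (h₀ ω + h₁ ω) * Y ω * X ω
            + (h₀ ω + 3 * h₁ ω) * Y ω * Y ω with hg
    have hgint : Integrable g μ := by
      rw [hg]
      have : (fun ω => (3 * h₀ ω + h₁ ω) * X ω * X ω
            + (h₀ ω + h₁ ω) * X ω * Y ω
            + (h₀ ω + h₁ ω) * Y ω * X ω
            + (h₀ ω + 3 * h₁ ω) * Y ω * Y ω)
          = (fun ω => (3 * h₀ ω + h₁ ω) * X ω * X ω)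
            + ((fun ω => (h₀ ω + h₁ ω) * X ω * Y ω)
            + ((fun ω => (h₀ ω + h₁ ω) * Y ω * X ω)
            + (fun ω => (h₀ ω + 3 * h₁ ω) * Y ω * Y ω))) := by
        funext ω; simp only [Pi.add_apply]; ring
      rw [this]
      exact hI1.add (hI2.add (hI3.add hI4))
    have hgnn : ∀ ω, 0 ≤ g ω := by
      intro ω
      show 0 ≤ (3 * h₀ ω + h₁ ω) * X ω * X ω
            + (h₀ ω + h₁ ω) * X ω * Y ω
            + (h₀ ω + h₁ ω) * Y ω * X ω
            + (h₀ ω + 3 * h₁ ω) * Y ω * Y ω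
      nlinarith [mul_nonneg (hpos₀ ω).le (sq_nonneg (X ω + Y ω)),
        mul_nonneg (hpos₀ ω).le (sq_nonneg (X ω)),
        mul_nonneg (hpos₁ ω).le (sq_nonneg (X ω + Y ω)),
        mul_nonneg (hpos₁ ω).le (sq_nonneg (Y ω))]
    have hnn : 0 ≤ ∫ ω, g ω ∂μ := integral_nonneg hgnn
    rcases hnn.lt_or_eq with hlt | heq
    · exact mul_pos (by norm_num) hlt
    · exfalso
      have hzero : g =ᵐ[μ] 0 := by
        rw [← integral_eq_zero_iff_of_nonneg hgnn hgint]
        exact heq.symm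
      have hXae : ∀ᵐ ω ∂μ, X ω = 0 := by
        filter_upwards [hzero] with ω hω
        have hω' : (3 * h₀ ω + h₁ ω) * X ω * X ω
            + (h₀ ω + h₁ ω) * X ω * Y ω
            + (h₀ ω + h₁ ω) * Y ω * X ω
            + (h₀ ω + 3 * h₁ ω) * Y ω * Y ω = 0 := by simpa using hω
        have hX2 : X ω ^ 2 ≤ 0 := by
          nlinarith [hpos₀ ω, hpos₁ ω, sq_nonneg (X ω + Y ω), sq_nonneg (Y ω),
            mul_nonneg (hpos₀ ω).le (sq_nonneg (X ω + Y ω)),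
            mul_nonneg (hpos₁ ω).le (sq_nonneg (X ω + Y ω)),
            mul_nonneg (hpos₁ ω).le (sq_nonneg (Y ω))]
        exact sq_eq_zero_iff.mp (le_antisymm hX2 (sq_nonneg _))
      have hYae : ∀ᵐ ω ∂μ, Y ω = 0 := by
        filter_upwards [hzero] with ω hω
        have hω' : (3 * h₀ ω + h₁ ω) * X ω * X ω
            + (h₀ ω + h₁ ω) * X ω * Y ω
            + (h₀ ω + h₁ ω) * Y ω * X ω
            + (h₀ ω + 3 * h₁ ω) * Y ω * Y ω = 0 := by simpa using hω
        have hY2 : Y ω ^ 2 ≤ 0 := by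
          nlinarith [hpos₀ ω, hpos₁ ω, sq_nonneg (X ω + Y ω), sq_nonneg (X ω),
            mul_nonneg (hpos₁ ω).le (sq_nonneg (X ω + Y ω)),
            mul_nonneg (hpos₀ ω).le (sq_nonneg (X ω + Y ω)),
            mul_nonneg (hpos₀ ω).le (sq_nonneg (X ω))]
        exact sq_eq_zero_iff.mp (le_antisymm hY2 (sq_nonneg _))
      have hx0 : x = 0 := hindep x hXae
      have hy0 : y = 0 := hindep y hYae
      apply hz
      rw [hzelim, hx0, hy0]
      funext i; cases i <;> rfl
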